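/- A perfect product is a set P ⊆ (2^ℕ)^ω of the form P = ∏_{k<ω} P(k) where each projection P(k) = {x(k) : x ∈ P} is a perfect subset of 2^ℕ. Fix φ: ω → ω taking every value infinitely often, and let q(m,j) = |{k < m : φ(k) = j}|. For perfect products P, Q define P ≤ₘ Q iff P(j) ≤_{q(m,j)} Q(j) for all j (refinement of perfect sets in the j-th coordinate). If (Pₙ) is a sequence of perfect products with P_{n+1} ≤_{n+1} Pₙ for all n, then Q = ⋂ₙ Pₙ is a perfect product with Q(j) = ⋂ₙ Pₙ(j) for all j, and Q ≤_{m+1} Pₘ for all m. -/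

import Mathlib

/-- Cantor space `2^ℕ`. -/
abbrev Cantor := ℕ → Bool

/-- A perfect subset of Cantor space: nonempty, closed, no isolated points. -/
def PerfectSet (X : Set Cantor) : Prop := X.Nonempty ∧ Perfect X

/-- The length of the stem of `X`: the length of the longest finite binary string
that is an initial segment of every element of `X`. -/
noncomputable def stemLen (X : Set Cantor) : ℕ :=
  sSup {n | ∀ x ∈ X, ∀ y ∈ X, ∀ i < n, x i = y i}

/-- Simple splitting piece `X^i = {x ∈ X | x(|stem X|) = i}`. -/
noncomputable def splitPiece (X : Set Cantor) (i : Bool) : Set Cantor :=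
  {x ∈ X | x (stemLen X) = i}

/-- Iterated simple splitting `X_s`: `X_Λ = X`, `X_{s⌢i} = (X_s)^i`. -/
noncomputable def iterSplit (X : Set Cantor) (s : List Bool) : Set Cantor :=
  s.foldl splitPiece X

/-- Refinement `X ≤ₙ Y`: `X_s ⊆ Y_s` for every binary string `s` of length `n`. -/
def refines (n : ℕ) (X Y : Set Cantor) : Prop :=
  ∀ s : List Bool, s.length = n → iterSplit X s ⊆ iterSplit Y s

/-- The perfect product `∏_k P(k) ⊆ (2^ℕ)^ω` determined by coordinatewise sets. -/
def prodSet (P : ℕ → Set Cantor) : Set (ℕ → Cantor) := {x | ∀ k, x k ∈ P k}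

/-- `P` is a perfect product (given by its coordinates `P k`). -/
def PerfectProduct (P : ℕ → Set Cantor) : Prop := ∀ k, PerfectSet (P k)

/-- `q(m,j) = |{k < m : φ(k) = j}|`. -/
def qcount (phi : ℕ → ℕ) (m j : ℕ) : ℕ :=
  ((Finset.range m).filter fun k => phi k = j).card

/-- `σ/j`: the substring of `σ` read along the positions `k < |σ|` with `φ(k) = j`. -/
def subAlong (phi : ℕ → ℕ) (j : ℕ) (σ : List Bool) : List Bool :=
  ((List.range σ.length).filter fun k => phi k = j).map fun k => σ.getD k false

/-- The split piece `P_σ` of a perfect product, coordinatewise: `P_σ(j) = (P(j))_{σ/j}`. -/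
noncomputable def prodSplit (phi : ℕ → ℕ) (P : ℕ → Set Cantor) (σ : List Bool) :
    ℕ → Set Cantor :=
  fun j => iterSplit (P j) (subAlong phi j σ)

/-- Refinement of perfect products: `P ≤ₘ Q` iff `P(j) ≤_{q(m,j)} Q(j)` for all `j`. -/
def prodRef (phi : ℕ → ℕ) (m : ℕ) (P Q : ℕ → Set Cantor) : Prop :=
  ∀ j, refines (qcount phi m j) (P j) (Q j)

/-- `D(σ,τ) = ω \ {φ(i) : i < m, σ(i) ≠ τ(i)}` (for strings of length `m`). -/
def Dset (phi : ℕ → ℕ) (m : ℕ) (σ τ : List Bool) : Set ℕ :=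
  {j | ¬ ∃ i < m, σ.getD i false ≠ τ.getD i false ∧ phi i = j}

-- agreement set
def agrSet (X : Set Cantor) : Set ℕ := {n | ∀ x ∈ X, ∀ y ∈ X, ∀ i < n, x i = y i}

lemma stemLen_def (X : Set Cantor) : stemLen X = sSup (agrSet X) := rfl

lemma zero_mem_agr (X : Set Cantor) : 0 ∈ agrSet X := by
  intro x _ y _ i hi; omega

lemma agr_nonempty (X : Set Cantor) : (agrSet X).Nonempty := ⟨0, zero_mem_agr X⟩

lemma agr_anti {X Y : Set Cantor} (h : Y ⊆ X) : agrSet X ⊆ agrSet Y := by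
  intro n hn x hx y hy i hi; exact hn x (h hx) y (h hy) i hi

lemma agr_le_of_ne {X : Set Cantor} {x y : Cantor} {i : ℕ} (hx : x ∈ X) (hy : y ∈ X)
    (h : x i ≠ y i) {n : ℕ} (hn : n ∈ agrSet X) : n ≤ i := by
  by_contra hc
  exact h (hn x hx y hy i (by omega))

lemma bddAbove_agr_of_ne {X : Set Cantor} {x y : Cantor} {i : ℕ} (hx : x ∈ X) (hy : y ∈ X)
    (h : x i ≠ y i) : BddAbove (agrSet X) :=
  ⟨i, fun n hn => agr_le_of_ne hx hy h hn⟩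

lemma stemLen_le_of_ne {X : Set Cantor} {x y : Cantor} {i : ℕ} (hx : x ∈ X) (hy : y ∈ X)
    (h : x i ≠ y i) : stemLen X ≤ i :=
  csSup_le (agr_nonempty X) (fun n hn => agr_le_of_ne hx hy h hn)

lemma stemLen_mem_agr {X : Set Cantor} (h : BddAbove (agrSet X)) : stemLen X ∈ agrSet X :=
  Nat.sSup_mem (agr_nonempty X) h

/-- all elements of X agree below stemLen X, provided agrSet is bounded. -/
lemma agree_below_stem {X : Set Cantor} (h : BddAbove (agrSet X)) :
    ∀ x ∈ X, ∀ y ∈ X, ∀ i < stemLen X, x i = y i := stemLen_mem_agr h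

lemma stemLen_le_stemLen {X Y : Set Cantor} (hYX : Y ⊆ X) (hY : BddAbove (agrSet Y)) :
    stemLen X ≤ stemLen Y :=
  csSup_le_csSup hY (agr_nonempty X) (agr_anti hYX)

-- topology basics
lemma cylinder_mem_nhds (x : Cantor) (N : ℕ) : {y : Cantor | ∀ i < N, y i = x i} ∈ nhds x := by
  have : {y : Cantor | ∀ i < N, y i = x i} = ⋂ i ∈ Finset.range N, (fun y : Cantor => y i) ⁻¹' {x i} := by
    ext y; simp [Set.mem_iInter]
  rw [this]
  exact Filter.biInter_finset_mem _ |>.2 fun i _ =>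
    IsOpen.mem_nhds ((continuous_apply i).isOpen_preimage _ (isOpen_discrete _)) rfl

lemma exists_cylinder_subset {x : Cantor} {U : Set Cantor} (hU : U ∈ nhds x) :
    ∃ N, ∀ y : Cantor, (∀ i < N, y i = x i) → y ∈ U := by
  rw [nhds_pi, Filter.mem_pi] at hU
  obtain ⟨I, hI, t, ht, hsub⟩ := hU
  obtain ⟨N, hN⟩ := hI.bddAbove
  refine ⟨N + 1, fun y hy => hsub ?_⟩
  intro i hi
  have : y i = x i := hy i (Nat.lt_succ_of_le (hN hi))
  rw [this]
  exact mem_of_mem_nhds (ht i)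

lemma isClosed_eval (n : ℕ) (b : Bool) : IsClosed {x : Cantor | x n = b} := by
  have h : {x : Cantor | x n = b} = (fun p : Cantor => p n) ⁻¹' {b} := rfl
  rw [h]; exact IsClosed.preimage (continuous_apply n) (isClosed_discrete _)

lemma isOpen_eval (n : ℕ) (b : Bool) : IsOpen {x : Cantor | x n = b} := by
  have h : {x : Cantor | x n = b} = (fun p : Cantor => p n) ⁻¹' {b} := rfl
  rw [h]; exact IsOpen.preimage (continuous_apply n) (isOpen_discrete _)

-- two distinct points
lemma two_pts {X : Set Cantor} (hX : PerfectSet X) : ∃ x ∈ X, ∃ y ∈ X, x ≠ y := by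
  obtain ⟨⟨x, hx⟩, hP⟩ := hX
  have := accPt_iff_nhds.1 (hP.acc x hx) Set.univ Filter.univ_mem
  obtain ⟨y, ⟨_, hyX⟩, hyx⟩ := this
  exact ⟨x, hx, y, hyX, fun h => hyx (h ▸ rfl)⟩

lemma bddAbove_agr_of_perfect {X : Set Cantor} (hX : PerfectSet X) : BddAbove (agrSet X) := by
  obtain ⟨x, hx, y, hy, hxy⟩ := two_pts hX
  obtain ⟨i, hi⟩ := Function.ne_iff.1 hxy
  exact bddAbove_agr_of_ne hx hy hi

/-- a perfect set splits at its stem -/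
lemma perfect_splits {X : Set Cantor} (hX : PerfectSet X) :
    ∀ i : Bool, (splitPiece X i).Nonempty := by
  have hbdd := bddAbove_agr_of_perfect hX
  have hnot : stemLen X + 1 ∉ agrSet X := by
    intro h
    have h2 : stemLen X + 1 ≤ stemLen X := le_csSup hbdd h
    omega
  simp only [agrSet, Set.mem_setOf_eq, not_forall] at hnot
  obtain ⟨x, hx, y, hy, i, hi, hne⟩ := hnot
  have hieq : i = stemLen X := by
    have h1 : i ≤ stemLen X := by omega
    rcases lt_or_eq_of_le h1 with h | h
    · exact absurd (agree_below_stem hbdd x hx y hy i h) hne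
    · exact h
  subst hieq
  intro b
  rcases Bool.eq_false_or_eq_true (x (stemLen X)) with h | h <;>
    rcases Bool.eq_false_or_eq_true (y (stemLen X)) with h' | h' <;>
    first
      | exact absurd (h.trans h'.symm) hne
      | (cases b
         · first | exact ⟨x, hx, h⟩ | exact ⟨y, hy, h'⟩
         · first | exact ⟨x, hx, h⟩ | exact ⟨y, hy, h'⟩)

lemma splitPiece_subset (X : Set Cantor) (i : Bool) : splitPiece X i ⊆ X := fun _ h => h.1

lemma splitPiece_perfect {X : Set Cantor} (hX : PerfectSet X) (i : Bool) :
    PerfectSet (splitPiece X i) := by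
  refine ⟨perfect_splits hX i, ?_, ?_⟩
  · exact IsClosed.inter hX.2.closed (isClosed_eval (stemLen X) i)
  · intro x hx
    rw [accPt_iff_nhds]
    intro U hU
    have hcyl : {y : Cantor | y (stemLen X) = i} ∈ nhds x :=
      IsOpen.mem_nhds (isOpen_eval _ _) hx.2
    obtain ⟨y, ⟨hyU, hyX⟩, hyx⟩ := accPt_iff_nhds.1 (hX.2.acc x hx.1) (U ∩ {y : Cantor | y (stemLen X) = i}) (Filter.inter_mem hU hcyl)
    exact ⟨y, ⟨hyU.1, hyX, hyU.2⟩, hyx⟩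

lemma iterSplit_nil (X : Set Cantor) : iterSplit X [] = X := rfl

lemma iterSplit_cons (X : Set Cantor) (i : Bool) (s : List Bool) :
    iterSplit X (i :: s) = iterSplit (splitPiece X i) s := rfl

lemma iterSplit_snoc (X : Set Cantor) (s : List Bool) (i : Bool) :
    iterSplit X (s ++ [i]) = splitPiece (iterSplit X s) i := by
  simp [iterSplit, List.foldl_append]

lemma iterSplit_perfect {X : Set Cantor} (hX : PerfectSet X) (s : List Bool) :
    PerfectSet (iterSplit X s) := by
  induction s generalizing X with
  | nil => exact hX
  | cons i s ih => exact ih (splitPiece_perfect hX i)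

lemma iterSplit_subset (X : Set Cantor) (s : List Bool) : iterSplit X s ⊆ X := by
  induction s generalizing X with
  | nil => exact subset_rfl
  | cons i s ih => exact (ih (splitPiece X i)).trans (splitPiece_subset X i)

lemma iterSplit_isClosed {X : Set Cantor} (hX : IsClosed X) (s : List Bool) :
    IsClosed (iterSplit X s) := by
  induction s generalizing X with
  | nil => exact hX
  | cons i s ih => exact ih (IsClosed.inter hX (isClosed_eval _ _))

/-- stem grows: stemLen of split piece of a perfect set -/
lemma stemLen_splitPiece_ge {X : Set Cantor} (hX : PerfectSet X) (i : Bool) :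
    stemLen X + 1 ≤ stemLen (splitPiece X i) := by
  have hbX := bddAbove_agr_of_perfect hX
  have hbP := bddAbove_agr_of_perfect (splitPiece_perfect hX i)
  refine le_csSup hbP ?_
  intro x hx y hy j hj
  rcases Nat.lt_succ_iff_lt_or_eq.1 hj with h | h
  · exact agree_below_stem hbX x hx.1 y hy.1 j h
  · rw [h, hx.2, hy.2]

lemma stemLen_iterSplit_ge {X : Set Cantor} (hX : PerfectSet X) (s : List Bool) :
    s.length ≤ stemLen (iterSplit X s) := by
  induction s using List.reverseRecOn with
  | nil => exact Nat.zero_le _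
  | append_singleton s i ih =>
    rw [iterSplit_snoc]
    have := stemLen_splitPiece_ge (iterSplit_perfect hX s) i
    simp only [List.length_append, List.length_cons, List.length_nil]
    omega

/-- every point has an address at every depth -/
lemma exists_address {X : Set Cantor} {x : Cantor} (hx : x ∈ X) (N : ℕ) :
    ∃ s : List Bool, s.length = N ∧ x ∈ iterSplit X s := by
  induction N with
  | zero => exact ⟨[], rfl, hx⟩
  | succ n ih =>
    obtain ⟨s, hlen, hmem⟩ := ih
    refine ⟨s ++ [x (stemLen (iterSplit X s))], by simp [hlen], ?_⟩
    rw [iterSplit_snoc]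
    exact ⟨hmem, rfl⟩

/-- split pieces cover -/
lemma mem_splitPiece_of_mem {X : Set Cantor} {x : Cantor} (hx : x ∈ X) :
    x ∈ splitPiece X (x (stemLen X)) := ⟨hx, rfl⟩

-- refines basics
lemma refines_refl (n : ℕ) (X : Set Cantor) : refines n X X := fun _ _ => subset_rfl

lemma refines_trans {n : ℕ} {X Y Z : Set Cantor} (h1 : refines n X Y) (h2 : refines n Y Z) :
    refines n X Z := fun s hs => (h1 s hs).trans (h2 s hs)

lemma refines_succ {n : ℕ} {X Y : Set Cantor} (h : refines (n + 1) X Y) : refines n X Y := by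
  intro s hs x hx
  have h1 : x ∈ iterSplit X (s ++ [x (stemLen (iterSplit X s))]) := by
    rw [iterSplit_snoc]; exact ⟨hx, rfl⟩
  have h2 := h (s ++ [x (stemLen (iterSplit X s))]) (by simp [hs]) h1
  rw [iterSplit_snoc] at h2
  exact h2.1

lemma refines_mono {n m : ℕ} (hnm : n ≤ m) {X Y : Set Cantor} (h : refines m X Y) :
    refines n X Y := by
  induction m with
  | zero => exact (Nat.le_zero.1 hnm) ▸ h
  | succ k ih =>
    rcases Nat.lt_succ_iff_lt_or_eq.1 (Nat.lt_succ_of_le hnm) with h' | h'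
    · exact ih (by omega) (refines_succ h)
    · exact h' ▸ h

lemma refines_subset {n : ℕ} {X Y : Set Cantor} (h : refines n X Y) : X ⊆ Y :=
  refines_mono (Nat.zero_le n) h [] rfl

/-- Stem равенство from pieces -/
lemma stemLen_eq_of_pieces {X Y : Set Cantor} (hYX : Y ⊆ X) {y0 y1 : Cantor}
    (h0 : y0 ∈ Y) (h1 : y1 ∈ Y) (hv : y0 (stemLen X) ≠ y1 (stemLen X)) :
    stemLen Y = stemLen X :=
  le_antisymm (stemLen_le_of_ne h0 h1 hv)
    (stemLen_le_stemLen hYX (bddAbove_agr_of_ne h0 h1 hv))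

/-- Stems agree along a refinement. -/
lemma stemLen_eq_of_refines {X Y : Set Cantor} (hY : PerfectSet Y) {n : ℕ}
    (h : refines (n + 1) Y X) {s : List Bool} (hs : s.length ≤ n) :
    stemLen (iterSplit Y s) = stemLen (iterSplit X s) := by
  have hsub : iterSplit Y s ⊆ iterSplit X s :=
    refines_mono (by omega) h s rfl
  have hYs : PerfectSet (iterSplit Y s) := iterSplit_perfect hY s
  have hp : ∀ b : Bool, ∃ y ∈ iterSplit Y s, y (stemLen (iterSplit X s)) = b := by
    intro b
    obtain ⟨y, hy⟩ := perfect_splits hYs b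
    have hy' : y ∈ iterSplit Y (s ++ [b]) := by rw [iterSplit_snoc]; exact hy
    have := refines_mono (by simp; omega) h (s ++ [b]) rfl hy'
    rw [iterSplit_snoc] at this
    exact ⟨y, hy.1, this.2⟩
  obtain ⟨y0, hy0, hv0⟩ := hp false
  obtain ⟨y1, hy1, hv1⟩ := hp true
  exact stemLen_eq_of_pieces hsub hy0 hy1 (by rw [hv0, hv1]; simp)

instance : CompactSpace Cantor := by infer_instance

section Fusion

variable {X : ℕ → Set Cantor} {r : ℕ → ℕ}
variable (hX : ∀ k, PerfectSet (X k)) (hr : Monotone r)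
variable (hchain : ∀ k, refines (r (k + 1)) (X (k + 1)) (X k))

include hr hchain in
lemma chain_ref : ∀ m k, m ≤ k → refines (r (m + 1)) (X k) (X m) := by
  intro m k hmk
  induction k with
  | zero => exact (Nat.le_zero.1 hmk) ▸ refines_refl _ _
  | succ i ih =>
    rcases Nat.lt_succ_iff_lt_or_eq.1 (Nat.lt_succ_of_le hmk) with h | h
    · have h1 : refines (r (m + 1)) (X (i + 1)) (X i) :=
        refines_mono (hr (by omega : m + 1 ≤ i + 1)) (hchain i)
      exact refines_trans h1 (ih (by omega))
    · exact h ▸ refines_refl _ _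

include hchain in
lemma X_anti : ∀ m k, m ≤ k → X k ⊆ X m := by
  intro m k hmk
  induction k with
  | zero => exact (Nat.le_zero.1 hmk) ▸ subset_rfl
  | succ i ih =>
    rcases Nat.lt_succ_iff_lt_or_eq.1 (Nat.lt_succ_of_le hmk) with h | h
    · exact (refines_subset (hchain i)).trans (ih (by omega))
    · exact h ▸ subset_rfl

include hchain in
lemma Q_eq_tail (m : ℕ) : (⋂ k, X k) = ⋂ k, X (m + k) := by
  apply Set.Subset.antisymm
  · exact Set.iInter_mono' fun k => ⟨m + k, subset_rfl⟩
  · intro x hx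
    simp only [Set.mem_iInter] at hx ⊢
    intro k
    exact X_anti hchain k (m + k) (by omega) (hx k)

include hr hchain in
lemma tail_decreasing {m : ℕ} {s : List Bool} (hs : s.length ≤ r (m + 1)) (k : ℕ) :
    iterSplit (X (m + k + 1)) s ⊆ iterSplit (X (m + k)) s := by
  have h1 : refines (r (m + 1)) (X (m + k + 1)) (X (m + k)) :=
    refines_mono (hr (by omega : m + 1 ≤ m + k + 1)) (hchain (m + k))
  exact refines_mono hs h1 s rfl

include hX hr hchain in
lemma tail_inter_nonempty {m : ℕ} {s : List Bool} (hs : s.length ≤ r (m + 1)) :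
    (⋂ k, iterSplit (X (m + k)) s).Nonempty := by
  apply IsCompact.nonempty_iInter_of_sequence_nonempty_isCompact_isClosed
    (fun k => iterSplit (X (m + k)) s)
  · exact fun k => tail_decreasing hr hchain hs k
  · exact fun k => (iterSplit_perfect (hX (m + k)) s).1
  · exact (iterSplit_isClosed (hX (m + 0)).2.closed s).isCompact
  · exact fun k => iterSplit_isClosed (hX (m + k)).2.closed s

include hX hr hchain in
lemma tail_stem_eq {n m : ℕ} (hm : n + 1 ≤ r (m + 1)) {s : List Bool} (hs : s.length ≤ n)
    (k : ℕ) : stemLen (iterSplit (X (m + k)) s) = stemLen (iterSplit (X m) s) := by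
  have h1 : refines (n + 1) (X (m + k)) (X m) :=
    refines_mono hm (chain_ref hr hchain m (m + k) (by omega))
  exact stemLen_eq_of_refines (hX (m + k)) h1 hs

include hX hr hchain in
lemma pieces_of_tail {n m : ℕ} (hm : n + 1 ≤ r (m + 1)) {s : List Bool} (hs : s.length ≤ n)
    (b : Bool) : ∃ y ∈ ⋂ k, iterSplit (X (m + k)) s, y (stemLen (iterSplit (X m) s)) = b := by
  obtain ⟨y, hy⟩ := tail_inter_nonempty hX hr hchain
    (s := s ++ [b]) (m := m) (by simp; omega)
  simp only [Set.mem_iInter, iterSplit_snoc] at hy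
  refine ⟨y, Set.mem_iInter.2 fun k => (hy k).1, ?_⟩
  have := (hy 0).2
  rwa [tail_stem_eq hX hr hchain hm hs 0] at this

include hX hr hchain in
lemma fusion_key {n m : ℕ} (hm : n + 1 ≤ r (m + 1)) :
    ∀ s : List Bool, s.length ≤ n →
      iterSplit (⋂ k, X k) s = (⋂ k, iterSplit (X (m + k)) s) ∧
      stemLen (iterSplit (⋂ k, X k) s) = stemLen (iterSplit (X m) s) := by
  intro s
  induction s using List.reverseRecOn with
  | nil =>
    intro _
    have h1 : iterSplit (⋂ k, X k) [] = ⋂ k, iterSplit (X (m + k)) [] := Q_eq_tail hchain m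
    refine ⟨h1, ?_⟩
    -- stem equality via pieces
    obtain ⟨y0, hy0, hv0⟩ := pieces_of_tail hX hr hchain hm (s := []) (Nat.zero_le n) false
    obtain ⟨y1, hy1, hv1⟩ := pieces_of_tail hX hr hchain hm (s := []) (Nat.zero_le n) true
    rw [h1] at *
    have hsub : (⋂ k, iterSplit (X (m + k)) []) ⊆ iterSplit (X m) [] := by
      intro x hx
      have := Set.mem_iInter.1 hx 0
      simpa using this
    exact stemLen_eq_of_pieces hsub hy0 hy1 (by rw [hv0, hv1]; simp)
  | append_singleton s i ih =>
    intro hlen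
    have hslen : s.length ≤ n := by simp at hlen; omega
    obtain ⟨h1, h2⟩ := ih hslen
    have hstem := tail_stem_eq hX hr hchain hm hslen
    have key1 : iterSplit (⋂ k, X k) (s ++ [i]) = ⋂ k, iterSplit (X (m + k)) (s ++ [i]) := by
      rw [iterSplit_snoc]
      have : splitPiece (iterSplit (⋂ k, X k) s) i =
          {x ∈ ⋂ k, iterSplit (X (m + k)) s | x (stemLen (iterSplit (X m) s)) = i} := by
        unfold splitPiece
        rw [h2, h1]
      rw [this]
      ext x
      simp only [Set.mem_setOf_eq, Set.mem_iInter, iterSplit_snoc]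
      constructor
      · rintro ⟨hx, hv⟩
        exact fun k => ⟨hx k, by rw [hstem k]; exact hv⟩
      · intro h
        exact ⟨fun k => (h k).1, by rw [← hstem 0]; exact (h 0).2⟩
    refine ⟨key1, ?_⟩
    -- stem equality at s ++ [i]
    have hsub : iterSplit (⋂ k, X k) (s ++ [i]) ⊆ iterSplit (X m) (s ++ [i]) := by
      rw [key1]
      intro x hx
      have := Set.mem_iInter.1 hx 0
      simpa using this
    obtain ⟨y0, hy0, hv0⟩ := pieces_of_tail hX hr hchain hm (s := s ++ [i]) hlen false
    obtain ⟨y1, hy1, hv1⟩ := pieces_of_tail hX hr hchain hm (s := s ++ [i]) hlen true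
    rw [← key1] at hy0 hy1
    exact stemLen_eq_of_pieces hsub hy0 hy1 (by rw [hv0, hv1]; simp)

end Fusion

lemma exists_big_index {r : ℕ → ℕ} (hr : Monotone r) (hub : ∀ c, ∃ k, c ≤ r k) (m c : ℕ) :
    ∃ m', m ≤ m' ∧ c ≤ r (m' + 1) := by
  obtain ⟨k, hk⟩ := hub c
  exact ⟨max m k, le_max_left _ _, hk.trans (hr (by omega))⟩

lemma fusion {X : ℕ → Set Cantor} {r : ℕ → ℕ}
    (hX : ∀ k, PerfectSet (X k)) (hr : Monotone r) (hub : ∀ c, ∃ k, c ≤ r k)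
    (hchain : ∀ k, refines (r (k + 1)) (X (k + 1)) (X k)) :
    PerfectSet (⋂ k, X k) ∧ ∀ m, refines (r (m + 1)) (⋂ k, X k) (X m) := by
  constructor
  · refine ⟨?_, ?_, ?_⟩
    · -- nonempty
      obtain ⟨m, _, hm⟩ := exists_big_index hr hub 0 1
      rw [Q_eq_tail hchain m]
      exact tail_inter_nonempty hX hr hchain (s := []) (by simpa using hm.trans (le_refl _) |>.trans (le_refl _) |> fun _ => Nat.zero_le _)
    · exact isClosed_iInter fun k => (hX k).2.closed
    · -- preperfect
      intro x hx
      rw [accPt_iff_nhds]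
      intro U hU
      obtain ⟨N, hN⟩ := exists_cylinder_subset hU
      obtain ⟨m', _, hm'⟩ := exists_big_index hr hub 0 (N + 2)
      obtain ⟨s, hslen, hxs⟩ := exists_address hx N
      obtain ⟨h1, h2⟩ := fusion_key hX hr hchain (n := N + 1) (m := m') hm' s (by omega)
      have hstemge : N ≤ stemLen (iterSplit (⋂ k, X k) s) := by
        rw [h2, ← hslen]
        exact stemLen_iterSplit_ge (hX m') s
      obtain ⟨y, hy, hyv⟩ := pieces_of_tail hX hr hchain (n := N + 1) (m := m') hm'
        (s := s) (by omega) (!(x (stemLen (iterSplit (⋂ k, X k) s))))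
      rw [← h1] at hy
      rw [← h2] at hyv
      have hyx : y ≠ x := by
        intro h
        rw [h] at hyv
        simp at hyv
      have hne : x (stemLen (iterSplit (⋂ k, X k) s)) ≠ y (stemLen (iterSplit (⋂ k, X k) s)) := by
        rw [hyv]
        simp
      have hagree : ∀ i < N, y i = x i := by
        intro i hi
        exact agree_below_stem (bddAbove_agr_of_ne hy hxs (Ne.symm hne)) y hy x hxs i (by omega)
      exact ⟨y, ⟨hN y hagree, iterSplit_subset _ s hy⟩, hyx⟩
  · -- refinement
    intro m s hs
    obtain ⟨m', hmm', hm'⟩ := exists_big_index hr hub m (r (m + 1) + 1)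
    have hkey := (fusion_key hX hr hchain (n := r (m + 1)) (m := m') hm' s (le_of_eq hs)).1
    rw [hkey]
    intro x hx
    have hx0 : x ∈ iterSplit (X m') s := by
      have := Set.mem_iInter.1 hx 0
      simpa using this
    exact chain_ref hr hchain m m' hmm' s hs hx0

lemma qcount_mono (phi : ℕ → ℕ) (j : ℕ) : Monotone fun m => qcount phi m j := by
  intro a b hab
  exact Finset.card_le_card (Finset.filter_subset_filter _ (Finset.range_subset_range.2 hab))

lemma qcount_unbounded (phi : ℕ → ℕ) (j : ℕ) (h : {k | phi k = j}.Infinite) :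
    ∀ n, ∃ m, n ≤ qcount phi m j := by
  intro n
  induction n with
  | zero => exact ⟨0, Nat.zero_le _⟩
  | succ n ih =>
    obtain ⟨m, hm⟩ := ih
    obtain ⟨k, hk, hmk⟩ := h.exists_gt m
    refine ⟨k + 1, ?_⟩
    have hsub : insert k ((Finset.range m).filter fun i => phi i = j) ⊆
        (Finset.range (k + 1)).filter fun i => phi i = j := by
      intro a ha
      rcases Finset.mem_insert.1 ha with rfl | ha
      · exact Finset.mem_filter.2 ⟨Finset.mem_range.2 (by omega), hk⟩
      · have := Finset.mem_filter.1 ha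
        exact Finset.mem_filter.2 ⟨Finset.mem_range.2
          (by have := Finset.mem_range.1 this.1; omega), this.2⟩
    have hknot : k ∉ (Finset.range m).filter fun i => phi i = j := by
      intro h'
      have := Finset.mem_range.1 (Finset.mem_filter.1 h').1
      omega
    have hcard := Finset.card_le_card hsub
    rw [Finset.card_insert_of_notMem hknot] at hcard
    unfold qcount at hm ⊢
    omega


/-- fusion for perfect products: if `P_{n+1} ≤_{n+1} Pₙ` for all `n`,
then `Q = ⋂ₙ Pₙ` is a perfect product with `Q(j) = ⋂ₙ Pₙ(j)`, and `Q ≤_{m+1} Pₘ`. -/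
theorem stmt5 (phi : ℕ → ℕ) (hphi : ∀ j, {k | phi k = j}.Infinite)
    (P : ℕ → ℕ → Set Cantor) (hperf : ∀ n, PerfectProduct (P n))
    (hchain : ∀ n, prodRef phi (n + 1) (P (n + 1)) (P n)) :
    PerfectProduct (fun j => ⋂ n, P n j) ∧
    prodSet (fun j => ⋂ n, P n j) = ⋂ n, prodSet (P n) ∧
    ∀ m, prodRef phi (m + 1) (fun j => ⋂ n, P n j) (P m) := by

  have hfus : ∀ j, PerfectSet (⋂ k, P k j) ∧
      ∀ m, refines (qcount phi (m + 1) j) (⋂ k, P k j) (P m j) := by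
    intro j
    exact fusion (fun k => hperf k j) (qcount_mono phi j)
      (qcount_unbounded phi j (hphi j)) (fun k => hchain k j)
  refine ⟨fun j => (hfus j).1, ?_, fun m j => (hfus j).2 m⟩
  ext x
  simp only [prodSet, Set.mem_setOf_eq, Set.mem_iInter]
  exact ⟨fun h n k => h k n, fun h k n => h n k⟩
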